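/- Let Z be a finite set of points in projective space ℙ^n over a field, with Hilbert function H_Z(d) = dim (R/I_Z)_d where R = k[x_0,...,x_n] and I_Z is the homogeneous ideal of Z. If H_Z(d_0) = H_Z(d_0 + 1) for some d_0 ≥ 0, then H_Z(d) = |Z| for all d ≥ d_0. -/
import Mathlib


open MvPolynomial

/-- Evaluation of a multivariate polynomial at a point, as a linear map. -/
noncomputable def evalAtₗ {k : Type*} [CommSemiring k] {n : ℕ} (a : Fin n → k) :
    MvPolynomial (Fin n) k →ₗ[k] k := (aeval a).toLinearMap

/-- The Hilbert function of a finite collection of (representatives of) points of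
projective space: `H_Z(d)` is the rank of the evaluation map from the space of
homogeneous polynomials of degree `d` to `k^Z`. -/
noncomputable def hilbertFunction (k : Type*) [Field k] {n : ℕ} {ι : Type*} [Fintype ι]
    (v : ι → Fin n → k) (d : ℕ) : ℕ :=
  Module.finrank k (LinearMap.range
    ((LinearMap.pi fun i : ι => evalAtₗ (v i)).comp
      (homogeneousSubmodule (Fin n) k d).subtype))

namespace HFAux

variable {k : Type*} [Field k] {n ℓ : ℕ} (v : Fin ℓ → Fin (n + 1) → k)

/-- Evaluation at all the points, as a linear map on the whole polynomial ring. -/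
noncomputable def EV : MvPolynomial (Fin (n + 1)) k →ₗ[k] (Fin ℓ → k) :=
  LinearMap.pi fun i => evalAtₗ (v i)

lemma EV_apply (F : MvPolynomial (Fin (n + 1)) k) (i : Fin ℓ) :
    EV v F i = aeval (v i) F := rfl

/-- The image of the degree-`d` homogeneous part under evaluation. -/
noncomputable def W (d : ℕ) : Submodule k (Fin ℓ → k) :=
  (homogeneousSubmodule (Fin (n + 1)) k d).map (EV v)

lemma hilbert_eq (d : ℕ) : hilbertFunction k v d = Module.finrank k (W v d) := by
  unfold hilbertFunction W EV
  rw [LinearMap.range_comp, Submodule.range_subtype]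

lemma mem_W {w : Fin ℓ → k} {d : ℕ} :
    w ∈ W v d ↔ ∃ F : MvPolynomial (Fin (n + 1)) k, F.IsHomogeneous d ∧ EV v F = w := by
  simp [W, Submodule.mem_map, mem_homogeneousSubmodule]

/-- Diagonal linear map on `k^ℓ`. -/
noncomputable def DL (c : Fin ℓ → k) : (Fin ℓ → k) →ₗ[k] (Fin ℓ → k) :=
  LinearMap.pi fun i => c i • LinearMap.proj i

lemma DL_apply (c w : Fin ℓ → k) (i : Fin ℓ) : DL c w i = c i * w i := rfl

lemma DL_comp (a b : Fin ℓ → k) : (DL a).comp (DL b) = (DL (a * b) : _ →ₗ[k] _) := by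
  refine LinearMap.ext fun w => ?_
  funext i
  simp [DL_apply, mul_assoc]

lemma finrank_map_DL (c : Fin ℓ → k) (hc : ∀ i, c i ≠ 0) (p : Submodule k (Fin ℓ → k)) :
    Module.finrank k (p.map (DL c)) = Module.finrank k p := by
  have h1 : (DL c).comp (DL fun i => (c i)⁻¹) = LinearMap.id := by
    refine LinearMap.ext fun w => ?_
    funext i
    simp only [LinearMap.comp_apply, LinearMap.id_apply, DL_apply]
    rw [mul_inv_cancel_left₀ (hc i)]
  have h2 : (DL fun i => (c i)⁻¹).comp (DL c) = LinearMap.id := by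
    refine LinearMap.ext fun w => ?_
    funext i
    simp only [LinearMap.comp_apply, LinearMap.id_apply, DL_apply]
    rw [inv_mul_cancel_left₀ (hc i)]
  let e : (Fin ℓ → k) ≃ₗ[k] (Fin ℓ → k) :=
    LinearEquiv.ofLinear (DL c) (DL fun i => (c i)⁻¹) h1 h2
  have : p.map (DL c) = p.map (e : (Fin ℓ → k) →ₗ[k] (Fin ℓ → k)) := rfl
  rw [this]
  exact LinearEquiv.finrank_map_eq e p

lemma map_DL_le {M : MvPolynomial (Fin (n + 1)) k} {e : ℕ} (hM : M.IsHomogeneous e) (d : ℕ) :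
    (W v d).map (DL fun i => aeval (v i) M) ≤ W v (d + e) := by
  rintro w ⟨x, hx, rfl⟩
  obtain ⟨F, hF, rfl⟩ := (mem_W v).1 hx
  refine (mem_W v).2 ⟨M * F, by simpa [add_comm] using hM.mul hF, ?_⟩
  funext i
  simp [EV_apply, DL_apply, map_mul]

lemma W_succ_eq (d : ℕ) :
    W v (d + 1) = ⨆ j : Fin (n + 1), (W v d).map (DL fun i => v i j) := by
  classical
  apply le_antisymm
  · rintro w ⟨F, hFmem, rfl⟩
    have hF : F.IsHomogeneous (d + 1) := (mem_homogeneousSubmodule _ _).1 hFmem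
    rw [show F = ∑ m ∈ F.support, monomial m (coeff m F) from F.as_sum, map_sum]
    refine Submodule.sum_mem _ fun m hm => ?_
    have hc : coeff m F ≠ 0 := MvPolynomial.mem_support_iff.1 hm
    have hdeg : m.degree = d + 1 := by
      rw [Finsupp.degree_eq_weight_one]; exact hF hc
    have hj : ∃ j, m j ≠ 0 := by
      by_contra hcon
      push_neg at hcon
      have : m = 0 := Finsupp.ext fun a => hcon a
      rw [this] at hdeg
      simp at hdeg
    obtain ⟨j, hj⟩ := hj
    have hle : Finsupp.single j 1 ≤ m :=
      Finsupp.single_le_iff.mpr (Nat.one_le_iff_ne_zero.mpr hj)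
    have hsplit : Finsupp.single j 1 + (m - Finsupp.single j 1) = m :=
      add_tsub_cancel_of_le hle
    have hdeg' : (m - Finsupp.single j 1).degree = d := by
      have : m.degree = (Finsupp.single j 1).degree + (m - Finsupp.single j 1).degree := by
        conv_lhs => rw [← hsplit]
        simp [Finsupp.degree_eq_weight_one, map_add]
      have hsing : (Finsupp.single j 1 : Fin (n + 1) →₀ ℕ).degree = 1 := by
        simp [Finsupp.degree_eq_weight_one, Finsupp.weight_apply, Finsupp.sum_single_index]
      rw [hsing] at this
      omega
    refine Submodule.mem_iSup_of_mem j ?_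
    refine ⟨EV v (monomial (m - Finsupp.single j 1) (coeff m F)), ?_, ?_⟩
    · exact (mem_W v).2 ⟨_, isHomogeneous_monomial _ hdeg', rfl⟩
    · have hXmul : (monomial m (coeff m F) : MvPolynomial (Fin (n + 1)) k)
          = X j * monomial (m - Finsupp.single j 1) (coeff m F) := by
        rw [show (X j : MvPolynomial (Fin (n + 1)) k) = monomial (Finsupp.single j 1) 1 from rfl,
          monomial_mul, one_mul, hsplit]
      funext i
      rw [DL_apply, EV_apply, EV_apply, hXmul, map_mul, aeval_X]
  · refine iSup_le fun j => ?_
    have := map_DL_le v (isHomogeneous_X k j) d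
    simpa using this

/-- The linear form with coefficient vector `c`, as a polynomial. -/
noncomputable def lin (c : Fin (n + 1) → k) : MvPolynomial (Fin (n + 1)) k :=
  ∑ j, C (c j) * X j

lemma lin_isHomogeneous (c : Fin (n + 1) → k) :
    (lin c : MvPolynomial (Fin (n + 1)) k).IsHomogeneous 1 :=
  IsHomogeneous.sum _ _ _ fun j _ => isHomogeneous_C_mul_X _ _

lemma aeval_lin (c a : Fin (n + 1) → k) : aeval a (lin c) = ∑ j, c j * a j := by
  simp [lin]

/-- There is a linear form not vanishing at any of the (nonzero) points. -/
lemma exists_L [Infinite k] (hv : ∀ i, v i ≠ 0) :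
    ∃ c : Fin (n + 1) → k, ∀ i, aeval (v i) (lin c) ≠ 0 := by
  by_contra hcon
  push_neg at hcon
  set Q : MvPolynomial (Fin (n + 1)) k := ∏ i, lin (v i) with hQ
  have hQ0 : Q = 0 := by
    apply MvPolynomial.funext
    intro a
    obtain ⟨i, hi⟩ := hcon a
    rw [aeval_lin] at hi
    rw [map_zero, hQ, map_prod]
    refine Finset.prod_eq_zero (Finset.mem_univ i) ?_
    have : eval a (lin (v i)) = ∑ j, v i j * a j := by simp [lin]
    rw [this, ← hi]
    exact Finset.sum_congr rfl fun j _ => mul_comm _ _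
  obtain ⟨i, -, hi⟩ := Finset.prod_eq_zero_iff.1 hQ0
  refine hv i (funext fun t => ?_)
  have := congrArg (eval (Pi.single t 1)) hi
  rw [map_zero] at this
  have heval : eval (Pi.single t 1) (lin (v i)) = v i t := by
    simp [lin, Pi.single_apply]
  rw [heval] at this
  simpa using this

/-- A linear form vanishing at `v j` but not at `v i`, for `i ≠ j`. -/
lemma exists_sep (hdist : ∀ i j, i ≠ j → ∀ c : k, v i ≠ c • v j) (i j : Fin ℓ) (hij : i ≠ j) :
    ∃ c : Fin (n + 1) → k, aeval (v j) (lin c) = 0 ∧ aeval (v i) (lin c) ≠ 0 := by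
  have hx : v i ∉ (Submodule.span k {v j}) := by
    intro hmem
    obtain ⟨a, ha⟩ := Submodule.mem_span_singleton.1 hmem
    exact hdist i j hij a ha.symm
  obtain ⟨f, hf0, hfbot⟩ :=
    Submodule.exists_dual_map_eq_bot_of_notMem hx inferInstance
  have hfj : f (v j) = 0 := by
    have : f (v j) ∈ (Submodule.span k {v j}).map f :=
      Submodule.mem_map_of_mem (Submodule.mem_span_singleton_self _)
    rw [hfbot] at this
    simpa using this
  have key : ∀ a : Fin (n + 1) → k,
      aeval a (lin fun t => f fun s => if t = s then 1 else 0) = f a := by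
    intro a
    rw [aeval_lin, LinearMap.pi_apply_eq_sum_univ f a]
    exact Finset.sum_congr rfl fun t _ => by rw [smul_eq_mul, mul_comm]
  exact ⟨fun t => f fun s => if t = s then 1 else 0, by rw [key]; exact hfj,
    by rw [key]; exact hf0⟩

/-- For `D = d + (ℓ - 1)` with separating forms available, the evaluation image is
everything. -/
lemma W_eq_top [Infinite k] (hv : ∀ i, v i ≠ 0)
    (hdist : ∀ i j, i ≠ j → ∀ c : k, v i ≠ c • v j) (d : ℕ) :
    W v (d + (ℓ - 1)) = ⊤ := by
  classical
  obtain ⟨L, hL⟩ := exists_L v hv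
  have hsep : ∀ i j : Fin ℓ, ∃ cc : Fin (n + 1) → k,
      (j ≠ i → aeval (v j) (lin cc) = 0) ∧ (j ≠ i → aeval (v i) (lin cc) ≠ 0) := by
    intro i j
    by_cases hji : j ≠ i
    · obtain ⟨cc, h1, h2⟩ := exists_sep v hdist i j (Ne.symm hji)
      exact ⟨cc, fun _ => h1, fun _ => h2⟩
    · exact ⟨0, fun hh => absurd hh hji, fun hh => absurd hh hji⟩
  choose c hc0 hcne using hsep
  set P : Fin ℓ → MvPolynomial (Fin (n + 1)) k := fun i =>
    (lin L) ^ d * ∏ j ∈ Finset.univ.erase i, lin (c i j) with hP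
  have hPhom : ∀ i, (P i).IsHomogeneous (d + (ℓ - 1)) := by
    intro i
    have h1 : ((lin L : MvPolynomial (Fin (n + 1)) k) ^ d).IsHomogeneous d := by
      simpa using (lin_isHomogeneous L).pow d
    have h2 : (∏ j ∈ Finset.univ.erase i, lin (c i j)).IsHomogeneous (ℓ - 1) := by
      have := IsHomogeneous.prod (Finset.univ.erase i) (fun j => lin (c i j)) (fun _ => 1)
        (fun j _ => lin_isHomogeneous _)
      simpa [Finset.card_erase_of_mem] using this
    exact h1.mul h2
  set w : Fin ℓ → (Fin ℓ → k) := fun i => EV v (P i) with hw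
  have hwW : ∀ i, w i ∈ W v (d + (ℓ - 1)) := fun i => (mem_W v).2 ⟨P i, hPhom i, rfl⟩
  have hdiag : ∀ i s, s ≠ i → w i s = 0 := by
    intro i s hs
    show aeval (v s) (P i) = 0
    rw [hP, map_mul, map_prod]
    refine mul_eq_zero_of_right _ ?_
    exact Finset.prod_eq_zero (Finset.mem_erase.2 ⟨hs, Finset.mem_univ s⟩) (hc0 i s hs)
  have hne : ∀ i, w i i ≠ 0 := by
    intro i
    show aeval (v i) (P i) ≠ 0
    rw [hP, map_mul, map_pow, map_prod]
    refine mul_ne_zero (pow_ne_zero _ (hL i)) ?_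
    rw [Finset.prod_ne_zero_iff]
    intro j hj
    exact hcne i j (Finset.mem_erase.1 hj).1
  rw [eq_top_iff]
  intro x _
  have hx : x = ∑ i, (x i * (w i i)⁻¹) • w i := by
    funext s
    rw [Finset.sum_apply, Finset.sum_eq_single s]
    · simp only [Pi.smul_apply, smul_eq_mul]
      rw [mul_assoc, inv_mul_cancel₀ (hne s), mul_one]
    · intro b _ hb
      simp [hdiag b s (Ne.symm hb)]
    · intro hns
      exact absurd (Finset.mem_univ s) hns
  rw [hx]
  exact Submodule.sum_mem _ fun i _ => Submodule.smul_mem _ _ (hwW i)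

end HFAux

/-- If `H_Z(d₀) = H_Z(d₀+1)` for some `d₀ ≥ 0`, then `H_Z(d) = |Z|` for all `d ≥ d₀`. -/
theorem hilbertFunction_stabilizes {k : Type*} [Field k] [IsAlgClosed k] {n ℓ : ℕ}
    (v : Fin ℓ → Fin (n + 1) → k)
    (hv : ∀ i, v i ≠ 0)
    (hdist : ∀ i j, i ≠ j → ∀ c : k, v i ≠ c • v j)
    (d₀ : ℕ) (h : hilbertFunction k v d₀ = hilbertFunction k v (d₀ + 1)) :
    ∀ d, d₀ ≤ d → hilbertFunction k v d = ℓ := by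
  open HFAux in
  intro d hd
  obtain ⟨L, hL⟩ := HFAux.exists_L v hv
  set m : Fin ℓ → k := fun i => aeval (v i) (lin L) with hm
  have step0 : W v (d₀ + 1) = (W v d₀).map (DL m) := by
    have hle := map_DL_le v (lin_isHomogeneous L) d₀
    refine (Submodule.eq_of_le_of_finrank_eq hle ?_).symm
    rw [finrank_map_DL m hL, ← hilbert_eq, ← hilbert_eq]
    exact h
  have step : ∀ t : ℕ, W v (d₀ + t + 1) = (W v (d₀ + t)).map (DL m) := by
    intro t
    induction t with
    | zero => simpa using step0
    | succ t ih =>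
      have hcomm : ∀ j : Fin (n + 1),
          Submodule.map (DL fun i => v i j) ((W v (d₀ + t)).map (DL m))
          = Submodule.map (DL m) ((W v (d₀ + t)).map (DL fun i => v i j)) := by
        intro j
        rw [← Submodule.map_comp, ← Submodule.map_comp, DL_comp, DL_comp, mul_comm]
      calc W v (d₀ + (t + 1) + 1)
          = ⨆ j : Fin (n + 1), ((W v (d₀ + t + 1)).map (DL fun i => v i j)) :=
            W_succ_eq v (d₀ + t + 1)
        _ = ⨆ j : Fin (n + 1),
              Submodule.map (DL m) ((W v (d₀ + t)).map (DL fun i => v i j)) := by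
            refine iSup_congr fun j => ?_
            rw [ih, hcomm j]
        _ = Submodule.map (DL m)
              (⨆ j : Fin (n + 1), (W v (d₀ + t)).map (DL fun i => v i j)) :=
            (Submodule.map_iSup _ _).symm
        _ = (W v (d₀ + t + 1)).map (DL m) := by rw [← W_succ_eq]
  have hconst : ∀ t : ℕ, hilbertFunction k v (d₀ + t) = hilbertFunction k v d₀ := by
    intro t
    induction t with
    | zero => rfl
    | succ t ih =>
      rw [hilbert_eq, show d₀ + (t + 1) = d₀ + t + 1 from rfl, step t,
        finrank_map_DL m hL, ← hilbert_eq, ih]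
  have htop : hilbertFunction k v (d₀ + (ℓ - 1)) = ℓ := by
    rw [hilbert_eq, W_eq_top v hv hdist d₀, finrank_top, Module.finrank_pi]
    exact Fintype.card_fin ℓ
  calc hilbertFunction k v d
      = hilbertFunction k v (d₀ + (d - d₀)) := by rw [Nat.add_sub_cancel' hd]
    _ = hilbertFunction k v d₀ := hconst _
    _ = hilbertFunction k v (d₀ + (ℓ - 1)) := (hconst _).symm
    _ = ℓ := htop
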